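/- Let s : ℕ^k → ℕ∞ and define S = { n ∈ ℕ^k : s n < ∞ and for all m ≺ n, s m > s n }. Then S is finite. -/

import Mathlib

theorem stmt_2 (k : ℕ) (s : (Fin k → ℕ) → ℕ∞) :
    {n : Fin k → ℕ | s n < ⊤ ∧ ∀ m : Fin k → ℕ, m < n → s n < s m}.Finite := by
  by_contra h
  rw [← Set.not_infinite, not_not] at h
  set F := h.natEmbedding with hF
  set f : ℕ → (Fin k → ℕ) := fun n => (F n : Fin k → ℕ) with hf
  have hfinj : Function.Injective f := fun a b hab => F.injective (Subtype.ext hab)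
  have hfmem : ∀ n, (f n) ∈ {n : Fin k → ℕ | s n < ⊤ ∧ ∀ m : Fin k → ℕ, m < n → s n < s m} :=
    fun n => (F n).2
  have hpwo : Set.IsPWO (Set.univ : Set (Fin k → ℕ)) :=
    Set.isPWO_univ_iff.mpr inferInstance
  obtain ⟨g, hg⟩ := hpwo.exists_monotone_subseq (f := f) (fun n => Set.mem_univ _)
  have hdec : ∀ n : ℕ, s (f (g (n + 1))) < s (f (g n)) := by
    intro n
    have hle : f (g n) ≤ f (g (n + 1)) := hg (Nat.le_succ n)
    have hne : f (g n) ≠ f (g (n + 1)) := fun e => (Nat.succ_ne_self n).symm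
      (g.injective (hfinj e))
    exact (hfmem (g (n + 1))).2 _ (lt_of_le_of_ne hle hne)
  exact (RelEmbedding.natGT (fun n => s (f (g n))) hdec).not_wellFounded
    wellFounded_lt
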